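/- Let W̃ = W ⋉ Q be the double affine Weyl group (W the affine Weyl group acting on the root lattice Q = Q̊ ⊕ ℤδ by w τ_β w⁻¹ = τ_{w(β)}), and W̃^ι the analogous group for the dual data. Then the map φ sending ẘ ↦ ẘ for ẘ ∈ W̊, λ_μ ↦ τ^ι_{μ/√p} for μ ∈ M, τ_β ↦ λ^ι_{√p β} for β ∈ Q̊, and τ_δ ↦ τ^ι_{−δ}, is a group isomorphism W̃ → W̃^ι, whose inverse is the analogous map φ^ι: W̃^ι → W̃. -/

import Mathlib

open scoped RealInnerProductSpace

namespace Paper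

variable {V : Type*} [NormedAddCommGroup V] [InnerProductSpace ℝ V]

/-- The reflection in the vector `α` (with respect to the real inner product). -/
noncomputable def refl (α x : V) : V := x - (2 * ⟪x, α⟫ / ⟪α, α⟫) • α

/-- A (reduced, irreducible, crystallographic) finite root system realized in a
real inner product space. -/
structure RootSystemData (V : Type*) [NormedAddCommGroup V] [InnerProductSpace ℝ V] where
  roots : Finset V
  ne_zero : ∀ α ∈ roots, α ≠ (0 : V)
  neg_mem : ∀ α ∈ roots, -α ∈ roots
  reflect_mem : ∀ α ∈ roots, ∀ β ∈ roots, refl α β ∈ roots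
  cartan_int : ∀ α ∈ roots, ∀ β ∈ roots, ∃ k : ℤ, (k : ℝ) = 2 * ⟪β, α⟫ / ⟪α, α⟫
  reduced : ∀ α ∈ roots, ∀ t : ℝ, t • α ∈ roots → t = 1 ∨ t = -1
  irreducible : ∀ S : Finset V, S ⊆ roots →
    (∀ α ∈ S, ∀ β ∈ roots, β ∉ S → ⟪α, β⟫ = 0) → S = ∅ ∨ S = roots

namespace RootSystemData

variable (R : RootSystemData V)

/-- A root of minimal length. -/
def IsShortRoot (α : V) : Prop := α ∈ R.roots ∧ ∀ β ∈ R.roots, ⟪α, α⟫ ≤ ⟪β, β⟫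

/-- A root of maximal length. -/
def IsLongRoot (α : V) : Prop := α ∈ R.roots ∧ ∀ β ∈ R.roots, ⟪β, β⟫ ≤ ⟪α, α⟫

/-- The root system has exactly two root lengths. -/
def TwoLengths : Prop := ∃ a ∈ R.roots, ∃ b ∈ R.roots, ⟪a, a⟫ ≠ ⟪b, b⟫ ∧
  ∀ c ∈ R.roots, ⟪c, c⟫ = ⟪a, a⟫ ∨ ⟪c, c⟫ = ⟪b, b⟫

/-- A linear functional determining a system of positive roots. -/
def IsRegular (f : V →ₗ[ℝ] ℝ) : Prop := ∀ α ∈ R.roots, f α ≠ 0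

/-- `θ` is the highest root for the positive system determined by `f`:
the dominant long positive root, which moreover dominates every positive root. -/
def IsHighestRoot (f : V →ₗ[ℝ] ℝ) (θ : V) : Prop :=
  R.IsLongRoot θ ∧ 0 < f θ ∧ ∀ α ∈ R.roots, 0 < f α → f α ≤ f θ ∧ 0 ≤ ⟪θ, α⟫

/-- `θs` is the highest short root for the positive system determined by `f`. -/
def IsHighestShortRoot (f : V →ₗ[ℝ] ℝ) (θs : V) : Prop :=
  R.IsShortRoot θs ∧ 0 < f θs ∧
    ∀ α ∈ R.roots, 0 < f α → (R.IsShortRoot α → f α ≤ f θs) ∧ 0 ≤ ⟪θs, α⟫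

/-- The inversion set `Π(w)` of `w`: positive roots sent to negative roots. -/
def inversions (f : V →ₗ[ℝ] ℝ) (w : V → V) : Set V :=
  {α | α ∈ R.roots ∧ 0 < f α ∧ f (w α) < 0}

/-- `Δ` is the base (set of simple roots) of the positive system determined by `f`. -/
def IsBase (f : V →ₗ[ℝ] ℝ) (Δ : Set V) : Prop :=
  Δ ⊆ R.roots ∧ (∀ a ∈ Δ, 0 < f a) ∧
    ∀ α ∈ R.roots, 0 < f α → α ∈ AddSubmonoid.closure Δ

end RootSystemData

/-- The product of the reflections in the listed vectors, leftmost acting last...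
`wordProd [a₁, …, aₚ] = s_{a₁} ∘ ⋯ ∘ s_{aₚ}`. -/
noncomputable def wordProd (L : List V) : V → V := L.foldr (fun a g => refl a ∘ g) id

/-- Membership in the (finite) Weyl group generated by the reflections in elements of `Δ`. -/
def InWeylWords (Δ : Set V) (w : V → V) : Prop :=
  ∃ L : List V, (∀ a ∈ L, a ∈ Δ) ∧ wordProd L = w

/-- Coxeter length with respect to the simple reflections in elements of `Δ`. -/
noncomputable def len (Δ : Set V) (w : V → V) : ℕ :=
  sInf {m | ∃ L : List V, (∀ a ∈ L, a ∈ Δ) ∧ L.length = m ∧ wordProd L = w}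

/-- The translation by `μ` (level-one action of `λ_μ`). -/
def transl (μ : V) : V → V := fun x => x + μ

/-- The affine simple reflection `s₀` (level-one action): `s₀(x) = s_θ(x) + θ`. -/
noncomputable def s0 (θ : V) : V → V := fun x => refl θ x + θ

/-- The affine simple reflections `s₀, s₁, …, sₙ`. -/
def affSimples (Δ : Set V) (θ : V) : Set (V → V) :=
  {g | (∃ a ∈ Δ, g = refl a) ∨ g = s0 θ}

/-- Membership in the affine Weyl group. -/
def InAffWords (Δ : Set V) (θ : V) (w : V → V) : Prop :=
  ∃ L : List (V → V), (∀ g ∈ L, g ∈ affSimples Δ θ) ∧ L.foldr (· ∘ ·) id = w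

/-- Coxeter length in the affine Weyl group. -/
noncomputable def alen (Δ : Set V) (θ : V) (w : V → V) : ℕ :=
  sInf {m | ∃ L : List (V → V), (∀ g ∈ L, g ∈ affSimples Δ θ) ∧ L.length = m ∧
    L.foldr (· ∘ ·) id = w}

end Paper

namespace Paper

variable {V : Type*} [NormedAddCommGroup V] [InnerProductSpace ℝ V]

/-- Elements `τ_{β+kδ} λ_μ ẘ` of the double affine Weyl group `W̃ = W ⋉ Q`,
recorded as triples `((β, k), μ, ẘ)`. -/
abbrev DAW (V : Type*) := (V × ℝ) × V × (V → V)

/-- Multiplication of `W̃` in the normal form `τ_{β+kδ} λ_μ ẘ`, obtained from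
`w τ_β w⁻¹ = τ_{w(β)}` and the level-zero action `λ_μ(x) = x − (x,μ)δ`. -/
noncomputable def dawMul (x y : DAW V) : DAW V :=
  ((x.1.1 + x.2.2 y.1.1, x.1.2 + y.1.2 - ⟪x.2.2 y.1.1, x.2.1⟫),
    x.2.1 + x.2.2 y.2.1, x.2.2 ∘ y.2.2)

/-- The subset of `(V × ℝ) × V × (V → V)` realizing `W̃`: `β ∈ Q̊`, `k ∈ ℤ`,
`μ ∈ M`, `ẘ ∈ W̊`. -/
def dawSet (Q M : AddSubgroup V) (Δ : Set V) : Set (DAW V) :=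
  {x | x.1.1 ∈ Q ∧ (∃ m : ℤ, x.1.2 = (m : ℝ)) ∧ x.2.1 ∈ M ∧ InWeylWords Δ x.2.2}

/-- The map `φ : W̃ → W̃^ι` determined by `ẘ ↦ ẘ`, `λ_μ ↦ τ^ι_{μ/√p}`,
`τ_β ↦ λ^ι_{√p β}` and `τ_δ ↦ τ^ι_{−δ}`, written in normal form. -/
noncomputable def dawPhi (p : ℝ) (x : DAW V) : DAW V :=
  (((Real.sqrt p)⁻¹ • x.2.1, -x.1.2 - ⟪x.2.1, x.1.1⟫),
    Real.sqrt p • x.1.1, x.2.2)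

lemma refl_map_smul (a : V) (c : ℝ) (x : V) : refl a (c • x) = c • refl a x := by
  have h : 2 * ⟪c • x, a⟫ / ⟪a, a⟫ = c * (2 * ⟪x, a⟫ / ⟪a, a⟫) := by
    rw [real_inner_smul_left]; ring
  simp only [refl, h, smul_sub, mul_smul]

lemma refl_map_add (a x y : V) : refl a (x + y) = refl a x + refl a y := by
  have h : 2 * ⟪x + y, a⟫ / ⟪a, a⟫ = 2 * ⟪x, a⟫ / ⟪a, a⟫ + 2 * ⟪y, a⟫ / ⟪a, a⟫ := by
    rw [inner_add_left]; ring
  simp only [refl, h, add_smul]; abel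

lemma inner_refl (a x y : V) : ⟪refl a x, refl a y⟫ = ⟪x, y⟫ := by
  by_cases h : a = 0
  · subst h; simp [refl]
  · have hc : ⟪a, a⟫ ≠ (0 : ℝ) := inner_self_ne_zero.mpr h
    simp only [refl, inner_sub_left, inner_sub_right, real_inner_smul_left,
      real_inner_smul_right]
    rw [real_inner_comm a y, real_inner_comm a x]
    field_simp
    ring

lemma wordProd_map_smul (L : List V) (c : ℝ) (x : V) :
    wordProd L (c • x) = c • wordProd L x := by
  induction L with
  | nil => simp [wordProd]
  | cons a L ih =>
      show refl a (wordProd L (c • x)) = c • refl a (wordProd L x)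
      rw [ih, refl_map_smul]

lemma wordProd_map_add (L : List V) (x y : V) :
    wordProd L (x + y) = wordProd L x + wordProd L y := by
  induction L with
  | nil => simp [wordProd]
  | cons a L ih =>
      show refl a (wordProd L (x + y)) = refl a (wordProd L x) + refl a (wordProd L y)
      rw [ih, refl_map_add]

lemma inner_wordProd (L : List V) (x y : V) :
    ⟪wordProd L x, wordProd L y⟫ = ⟪x, y⟫ := by
  induction L with
  | nil => simp [wordProd]
  | cons a L ih =>
      show ⟪refl a (wordProd L x), refl a (wordProd L y)⟫ = ⟪x, y⟫
      rw [inner_refl, ih]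

end Paper

open Paper in
/-- `φ : W̃ → W̃^ι` (with `M^ι = √p·Q̊` and `Q̊^ι = (1/√p)·M`) is a
group isomorphism whose inverse is the analogous map `φ^ι` (which has the same
formula, so `φ ∘ φ = id`), acting on the generators by `ẘ ↦ ẘ`,
`λ_μ ↦ τ^ι_{μ/√p}`, `τ_β ↦ λ^ι_{√p β}`, `τ_δ ↦ τ^ι_{−δ}`. -/
theorem daw_involution
    {V : Type*} [NormedAddCommGroup V] [InnerProductSpace ℝ V]
    (R : RootSystemData V) (f : V →ₗ[ℝ] ℝ) (Δ : Set V)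
    (hreg : R.IsRegular f) (hbase : R.IsBase f Δ)
    (p : ℝ) (hp : p = 1 ∨ p = 2 ∨ p = 3)
    (Qlat Mlat Qι Mι : AddSubgroup V)
    (hint : ∀ μ ∈ Mlat, ∀ β ∈ Qlat, ∃ m : ℤ, ⟪μ, β⟫ = (m : ℝ))
    (hQι : (Qι : Set V) = (fun v => (Real.sqrt p)⁻¹ • v) '' (Mlat : Set V))
    (hMι : (Mι : Set V) = (fun v => Real.sqrt p • v) '' (Qlat : Set V)) :
    Set.BijOn (dawPhi p) (dawSet Qlat Mlat Δ) (dawSet Qι Mι Δ) ∧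
    (∀ x ∈ dawSet Qlat Mlat Δ, ∀ y ∈ dawSet Qlat Mlat Δ,
      dawPhi p (dawMul x y) = dawMul (dawPhi p x) (dawPhi p y)) ∧
    (dawPhi p ∘ dawPhi p = (id : DAW V → DAW V)) ∧
    (∀ w : V → V, dawPhi p ((0, 0), 0, w) = ((0, 0), 0, w)) ∧
    (∀ μ : V, dawPhi p ((0, 0), μ, id) = (((Real.sqrt p)⁻¹ • μ, 0), 0, id)) ∧
    (∀ β : V, dawPhi p ((β, 0), 0, id) = ((0, 0), Real.sqrt p • β, id)) ∧
    dawPhi p ((0, 1), 0, id) = ((0, -1), 0, (id : V → V)) := by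
  have hp0 : 0 < p := by rcases hp with h | h | h <;> rw [h] <;> norm_num
  set s := Real.sqrt p with hs_def
  have hs : s ≠ 0 := by
    simpa [hs_def] using (Real.sqrt_pos.mpr hp0).ne'
  have hinv : s⁻¹ * s = 1 := inv_mul_cancel₀ hs
  have hinv' : s * s⁻¹ = 1 := mul_inv_cancel₀ hs
  -- the involution property (holds for all x)
  have hinvol : ∀ x : DAW V, dawPhi p (dawPhi p x) = x := by
    rintro ⟨⟨β, k⟩, μ, w⟩
    have h2 : -(-k - ⟪μ, β⟫) - ⟪s • β, s⁻¹ • μ⟫ = k := by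
      rw [real_inner_smul_left, real_inner_smul_right, ← mul_assoc, hinv', one_mul,
        real_inner_comm μ β]
      ring
    show ((s⁻¹ • (s • β), -(-k - ⟪μ, β⟫) - ⟪s • β, s⁻¹ • μ⟫), s • (s⁻¹ • μ), w)
      = ((β, k), μ, w)
    rw [smul_smul, smul_smul, hinv, hinv', one_smul, one_smul, h2]
  -- forward maps-to
  have hmapsTo : Set.MapsTo (dawPhi p) (dawSet Qlat Mlat Δ) (dawSet Qι Mι Δ) := by
    rintro ⟨⟨β, k⟩, μ, w⟩ ⟨hβ, ⟨m, hm⟩, hμ, hw⟩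
    obtain ⟨m', hm'⟩ := hint μ hμ β hβ
    refine ⟨?_, ⟨-m - m', ?_⟩, ?_, hw⟩
    · have : s⁻¹ • μ ∈ (Qι : Set V) := by
        rw [hQι]; exact ⟨μ, hμ, rfl⟩
      exact this
    · show -k - ⟪μ, β⟫ = ((-m - m' : ℤ) : ℝ)
      have hk : k = (m : ℝ) := hm
      rw [hk, hm']; push_cast; ring
    · have : s • β ∈ (Mι : Set V) := by
        rw [hMι]; exact ⟨β, hβ, rfl⟩
      exact this
  -- backward maps-to
  have hmapsTo' : Set.MapsTo (dawPhi p) (dawSet Qι Mι Δ) (dawSet Qlat Mlat Δ) := by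
    rintro ⟨⟨β, k⟩, μ, w⟩ ⟨hβ, ⟨m, hm⟩, hμ, hw⟩
    have hβ' : β ∈ (Qι : Set V) := hβ
    have hμ' : μ ∈ (Mι : Set V) := hμ
    rw [hQι] at hβ'; rw [hMι] at hμ'
    obtain ⟨ν, hν, rfl⟩ := hβ'
    obtain ⟨γ, hγ, rfl⟩ := hμ'
    obtain ⟨m', hm'⟩ := hint ν hν γ hγ
    refine ⟨?_, ⟨-m - m', ?_⟩, ?_, hw⟩
    · show s⁻¹ • s • γ ∈ Qlat
      rw [smul_smul, hinv, one_smul]; exact hγ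
    · show -k - ⟪s • γ, s⁻¹ • ν⟫ = ((-m - m' : ℤ) : ℝ)
      have hk : k = (m : ℝ) := hm
      rw [real_inner_smul_left, real_inner_smul_right, ← mul_assoc, hinv', one_mul,
        real_inner_comm ν γ, hk, hm']
      push_cast; ring
    · show s • s⁻¹ • ν ∈ Mlat
      rw [smul_smul, hinv', one_smul]; exact hν
  refine ⟨⟨hmapsTo, fun x _ y _ h => by rw [← hinvol x, h, hinvol], ?_⟩, ?_, ?_, ?_, ?_, ?_, ?_⟩
  · -- surjectivity
    intro y hy
    exact ⟨dawPhi p y, hmapsTo' hy, hinvol y⟩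
  · -- multiplicativity
    rintro ⟨⟨β₁, k₁⟩, μ₁, w₁⟩ ⟨_, _, _, L₁, _, rfl⟩ ⟨⟨β₂, k₂⟩, μ₂, w₂⟩ _
    simp only [dawPhi, dawMul]
    refine Prod.ext (Prod.ext ?_ ?_) (Prod.ext ?_ rfl)
    · show s⁻¹ • (μ₁ + wordProd L₁ μ₂) = s⁻¹ • μ₁ + wordProd L₁ (s⁻¹ • μ₂)
      rw [wordProd_map_smul, smul_add]
    · show -(k₁ + k₂ - ⟪wordProd L₁ β₂, μ₁⟫) - ⟪μ₁ + wordProd L₁ μ₂, β₁ + wordProd L₁ β₂⟫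
        = -k₁ - ⟪μ₁, β₁⟫ + (-k₂ - ⟪μ₂, β₂⟫) - ⟪wordProd L₁ (s⁻¹ • μ₂), s • β₁⟫
      rw [wordProd_map_smul, real_inner_smul_left, real_inner_smul_right,
        inner_add_left, inner_add_right, inner_add_right,
        inner_wordProd, real_inner_comm (wordProd L₁ β₂) μ₁, ← mul_assoc, hinv, one_mul]
      ring
    · show s • (β₁ + wordProd L₁ β₂) = s • β₁ + wordProd L₁ (s • β₂)
      rw [wordProd_map_smul, smul_add]
  · funext x; exact hinvol x
  · intro w; simp [dawPhi]
  · intro μ; simp [dawPhi, hs_def]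
  · intro β; simp [dawPhi, hs_def]
  · simp [dawPhi]
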